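/- Let i, i' ∈ R(u,v) be two reduced words related by a 2- or 3-move. Then the permutation σ_{i',i} of [1,m] sends i-bounded indices to i'-bounded indices. Moreover, if the move relating i and i' is non-trivial, then its position k is i-bounded and σ_{i',i}(k) = k. -/

import Mathlib

open scoped Classical

namespace SLC

variable {V : Type*} [DecidableEq V]

/-- The simply-laced Coxeter matrix associated with a simple graph `P`:
`M i i = 1`, `M i j = 3` if `i` and `j` are adjacent, and `M i j = 2` otherwise. -/
noncomputable def coxeterMatrix (P : SimpleGraph V) : CoxeterMatrix V where
  M := fun i j => if i = j then 1 else if P.Adj i j then 3 else 2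
  isSymm := by
    ext i j
    show (if j = i then (1 : ℕ) else if P.Adj j i then 3 else 2) =
      (if i = j then 1 else if P.Adj i j then 3 else 2)
    by_cases h : i = j
    · subst h; rfl
    · rw [if_neg (Ne.symm h), if_neg h]
      by_cases ha : P.Adj i j
      · rw [if_pos (P.adj_symm ha), if_pos ha]
      · rw [if_neg (fun hc => ha (P.adj_symm hc)), if_neg ha]
  diagonal := by intro i; simp
  off_diagonal := by
    intro i i' h
    show (if i = i' then (1 : ℕ) else if P.Adj i i' then 3 else 2) ≠ 1
    rw [if_neg h]
    split <;> omega

/-- `e` is a reduced word for the pair `(u, v)`: the subword of entries with negative sign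
(first component `false`), with signs forgotten, is a reduced word for `u`, and the subword of
entries with positive sign is a reduced word for `v`. -/
def IsRWordPair {W : Type*} [Group W] (P : SimpleGraph V)
    (cs : CoxeterSystem (coxeterMatrix P) W) (u v : W) {m : ℕ}
    (e : Fin m → Bool × V) : Prop :=
  cs.wordProd (((List.ofFn e).filter fun p => !p.1).map Prod.snd) = u ∧
    (((List.ofFn e).filter fun p => !p.1).map Prod.snd).length = cs.length u ∧
    cs.wordProd (((List.ofFn e).filter fun p => p.1).map Prod.snd) = v ∧
    (((List.ofFn e).filter fun p => p.1).map Prod.snd).length = cs.length v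

/-- `k = l⁻`: `k` is the largest index smaller than `l` carrying the same letter of `P`. -/
def IsPred {m : ℕ} (e : Fin m → Bool × V) (k l : Fin m) : Prop :=
  k < l ∧ (e k).2 = (e l).2 ∧ ∀ j, k < j → j < l → (e j).2 ≠ (e l).2

/-- The index `l` is `e`-bounded: `l⁻ > 0`, i.e. `l` has a predecessor. -/
def BoundedIdx {m : ℕ} (e : Fin m → Bool × V) (l : Fin m) : Prop :=
  ∃ k, IsPred e k l

/-- Conditions (ii) and (iii) of Definition 3.1 (inclined edges), for `k < l`. -/
def InclCond {m : ℕ} (P : SimpleGraph V) (e : Fin m → Bool × V) (k l : Fin m) : Prop :=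
  k < l ∧ P.Adj (e k).2 (e l).2 ∧
    ((∃ p, IsPred e p l ∧ p < k ∧ (∀ q, IsPred e q k → q < p) ∧ (e p).1 = (e k).1) ∨
     (∃ q, IsPred e q k ∧ (∀ p, IsPred e p l → p < q) ∧ (e q).1 = !(e k).1))

/-- `a → b` is a directed edge of the graph `Σ(e)`. -/
def DirEdge {m : ℕ} (P : SimpleGraph V) (e : Fin m → Bool × V) (a b : Fin m) : Prop :=
  (IsPred e a b ∧ (e a).1 = true) ∨ (IsPred e b a ∧ (e b).1 = false) ∨
    (InclCond P e a b ∧ (e a).1 = false) ∨ (InclCond P e b a ∧ (e b).1 = true)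

/-- `{a, b}` is an edge of the graph `Σ(e)` (in some direction). -/
def UEdge {m : ℕ} (P : SimpleGraph V) (e : Fin m → Bool × V) (a b : Fin m) : Prop :=
  DirEdge P e a b ∨ DirEdge P e b a

/-- Adjacency in the doubled graph `P̃`. -/
def TAdj (P : SimpleGraph V) (p q : Bool × V) : Prop :=
  p.1 = q.1 ∧ P.Adj p.2 q.2

/-- The negative of a letter of `P̃`. -/
def negEnt (p : Bool × V) : Bool × V := (!p.1, p.2)

/-- The combinatorial data of a 2- or 3-move: the (consecutive) positions involved. -/
inductive MoveSpec (m : ℕ) where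
  | two (a b : Fin m)
  | three (a b c : Fin m)

/-- The position of a move (the last of the positions involved). -/
def MoveSpec.pos {m : ℕ} : MoveSpec m → Fin m
  | .two _ b => b
  | .three _ _ c => c

/-- `e'` is obtained from `e` by the 2- or 3-move described by `s`. -/
def IsMove {m : ℕ} (P : SimpleGraph V) (e e' : Fin m → Bool × V) : MoveSpec m → Prop
  | .two a b => (b : ℕ) = (a : ℕ) + 1 ∧ ¬ TAdj P (e a) (e b) ∧
      e' a = e b ∧ e' b = e a ∧ ∀ l, l ≠ a → l ≠ b → e' l = e l
  | .three a b c => (b : ℕ) = (a : ℕ) + 1 ∧ (c : ℕ) = (b : ℕ) + 1 ∧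
      e c = e a ∧ TAdj P (e b) (e c) ∧
      e' a = e b ∧ e' b = e a ∧ e' c = e b ∧ ∀ l, l ≠ a → l ≠ b → l ≠ c → e' l = e l

/-- A move is trivial if it is a 2-move interchanging entries which are not opposite. -/
def MoveTrivial {m : ℕ} (e : Fin m → Bool × V) : MoveSpec m → Prop
  | .two a b => e b ≠ negEnt (e a)
  | .three _ _ _ => False

/-- The permutation `σ` associated with a move. -/
noncomputable def moveSigma {m : ℕ} (e : Fin m → Bool × V) : MoveSpec m → Equiv.Perm (Fin m)
  | .two a b => if e b = negEnt (e a) then 1 else Equiv.swap a b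
  | .three a b _ => Equiv.swap a b

/-- The skew-symmetric form `Ω` of the graph `Σ(e)`, over a commutative ring `R`. -/
noncomputable def omegaForm (R : Type*) [CommRing R] {m : ℕ} (P : SimpleGraph V)
    (e : Fin m → Bool × V) (x y : Fin m → R) : R :=
  ∑ a : Fin m, ∑ b : Fin m, if DirEdge P e a b then x a * y b - x b * y a else 0

/-- The symplectic transvection `τ_k` of the graph `Σ(e)`, over `R`. -/
noncomputable def transv (R : Type*) [CommRing R] {m : ℕ} (P : SimpleGraph V)
    (e : Fin m → Bool × V) (k : Fin m) (x : Fin m → R) : Fin m → R :=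
  x - omegaForm R P e x (Pi.single k 1) • (Pi.single k 1 : Fin m → R)

/-- The group `Γ_e ⊆ GL_m(ℤ)` generated by the transvections `τ_k`, `k ∈ B(e)`. -/
noncomputable def Gamma {m : ℕ} (P : SimpleGraph V) (e : Fin m → Bool × V) :
    Subgroup ((Fin m → ℤ) ≃ₗ[ℤ] (Fin m → ℤ)) :=
  Subgroup.closure {g | ∃ k, BoundedIdx e k ∧ ⇑g = transv ℤ P e k}

/-- The group `Γ_e(F₂)` of linear transformations of `F₂^m` generated by the reductions
modulo 2 of the transvections `τ_k`, `k ∈ B(e)`. -/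
noncomputable def GammaF2 {m : ℕ} (P : SimpleGraph V) (e : Fin m → Bool × V) :
    Subgroup (Equiv.Perm (Fin m → ZMod 2)) :=
  Subgroup.closure {g | ∃ k, BoundedIdx e k ∧ ⇑g = transv (ZMod 2) P e k}

/-- The map `φ⁺` associated with a move. -/
noncomputable def phiP {m : ℕ} (P : SimpleGraph V) (e : Fin m → Bool × V) (s : MoveSpec m)
    (x : Fin m → ℤ) : Fin m → ℤ := fun l =>
  if l = s.pos ∧ ¬ MoveTrivial e s then
    (∑ a : Fin m, if DirEdge P e a s.pos then x a else 0) - x s.pos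
  else x (moveSigma e s l)

/-- The map `φ⁻` associated with a move. -/
noncomputable def phiM {m : ℕ} (P : SimpleGraph V) (e : Fin m → Bool × V) (s : MoveSpec m)
    (x : Fin m → ℤ) : Fin m → ℤ := fun l =>
  if l = s.pos ∧ ¬ MoveTrivial e s then
    (∑ b : Fin m, if DirEdge P e s.pos b then x b else 0) - x s.pos
  else x (moveSigma e s l)


variable {V : Type*} [DecidableEq V] [Fintype V] {W : Type*} [Group W]

section Aux

variable {V : Type*} [DecidableEq V] {W : Type*} [Group W]

/-- An index is bounded iff some smaller index carries the same letter. -/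
lemma boundedIdx_iff {m : ℕ} (e : Fin m → Bool × V) (l : Fin m) :
    BoundedIdx e l ↔ ∃ k, k < l ∧ (e k).2 = (e l).2 := by
  constructor
  · rintro ⟨k, hk, hl, -⟩; exact ⟨k, hk, hl⟩
  · rintro ⟨k, hk, hkl⟩
    classical
    set S := Finset.univ.filter (fun j : Fin m => j < l ∧ (e j).2 = (e l).2) with hS
    have hSne : S.Nonempty := ⟨k, by simp [hS, hk, hkl]⟩
    have hmem := S.max'_mem hSne
    simp only [hS, Finset.mem_filter, Finset.mem_univ, true_and] at hmem
    refine ⟨S.max' hSne, hmem.1, hmem.2, ?_⟩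
    intro j h1 h2 hj
    have hjS : j ∈ S := by simp [hS, h2, hj]
    exact absurd (S.le_max' j hjS) (not_le.mpr h1)

lemma reduced_no_rep {M : CoxeterMatrix V} (cs : CoxeterSystem M W)
    (x : W) (w1 w2 : List V) (i : V)
    (hp : cs.wordProd (w1 ++ i :: i :: w2) = x)
    (hl : (w1 ++ i :: i :: w2).length = cs.length x) : False := by
  have h1 : cs.wordProd (w1 ++ w2) = x := by
    rw [← hp, CoxeterSystem.wordProd_append, CoxeterSystem.wordProd_append,
      CoxeterSystem.wordProd_cons, CoxeterSystem.wordProd_cons,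
      ← mul_assoc (cs.simple i), cs.simple_mul_simple_self, one_mul]
  have h2 := cs.length_wordProd_le (w1 ++ w2)
  rw [h1] at h2
  simp only [List.length_append, List.length_cons] at hl h2
  omega

lemma filter_decomp {m : ℕ} (e : Fin m → Bool × V) (a b : Fin m) (hab : (b : ℕ) = (a : ℕ) + 1)
    (f : Bool × V → Bool) (hfa : f (e a) = true) (hfb : f (e b) = true) :
    ∃ w1 w2, (((List.ofFn e).filter f).map Prod.snd) = w1 ++ (e a).2 :: (e b).2 :: w2 := by
  have hlen : (List.ofFn e).length = m := List.length_ofFn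
  have ha : (a : ℕ) < (List.ofFn e).length := by rw [hlen]; exact a.isLt
  have hb1 : (a : ℕ) + 1 < (List.ofFn e).length := by
    rw [hlen]; have := b.isLt; omega
  have hga : (List.ofFn e)[(a : ℕ)]'ha = e a := by
    rw [List.getElem_ofFn]
  have hgb : (List.ofFn e)[(a : ℕ) + 1]'hb1 = e b := by
    rw [List.getElem_ofFn]
    congr 1
    exact Fin.ext (by simp [hab])
  have h2 : (List.ofFn e).drop (a : ℕ) = e a :: (e b :: (List.ofFn e).drop ((a : ℕ) + 2)) := by
    rw [List.drop_eq_getElem_cons ha, hga]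
    congr 1
    rw [List.drop_eq_getElem_cons hb1, hgb]
  have h1 : List.ofFn e = (List.ofFn e).take (a : ℕ) ++
      (e a :: e b :: (List.ofFn e).drop ((a : ℕ) + 2)) := by
    conv_lhs => rw [← List.take_append_drop (a : ℕ) (List.ofFn e)]
    rw [h2]
  refine ⟨(((List.ofFn e).take (a : ℕ)).filter f).map Prod.snd,
    (((List.ofFn e).drop ((a : ℕ) + 2)).filter f).map Prod.snd, ?_⟩
  conv_lhs => rw [h1]
  rw [List.filter_append, List.filter_cons_of_pos hfa, List.filter_cons_of_pos hfb,
    List.map_append]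
  simp

/-- In a reduced word pair, adjacent entries with the same sign carry distinct letters. -/
lemma no_adj_eq (P : SimpleGraph V) (cs : CoxeterSystem (coxeterMatrix P) W)
    (u v : W) {m : ℕ} (e : Fin m → Bool × V) (he : IsRWordPair P cs u v e)
    (a b : Fin m) (hab : (b : ℕ) = (a : ℕ) + 1) (hsgn : (e a).1 = (e b).1) :
    (e a).2 ≠ (e b).2 := by
  intro heq
  obtain ⟨h1, h2, h3, h4⟩ := he
  cases hsa : (e a).1 with
  | false =>
    obtain ⟨w1, w2, hw⟩ := filter_decomp e a b hab (fun p => !p.1)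
      (by simp [hsa]) (by simp [← hsgn, hsa])
    rw [← heq] at hw
    rw [hw] at h1 h2
    exact reduced_no_rep cs u w1 w2 (e a).2 h1 h2
  | true =>
    obtain ⟨w1, w2, hw⟩ := filter_decomp e a b hab (fun p => p.1)
      (by simp [hsa]) (by simp [← hsgn, hsa])
    rw [← heq] at hw
    rw [hw] at h3 h4
    exact reduced_no_rep cs v w1 w2 (e a).2 h3 h4

lemma swap_lt {m : ℕ} {a b k l : Fin m} (hab : (b : ℕ) = (a : ℕ) + 1) (hkl : k < l)
    (h : ¬(k = a ∧ l = b)) : Equiv.swap a b k < Equiv.swap a b l := by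
  have hab' : a ≠ b := fun h' => by rw [h'] at hab; omega
  rcases eq_or_ne k a with rfl | hka
  · rcases eq_or_ne l b with rfl | hlb
    · exact absurd ⟨rfl, rfl⟩ h
    · have hlk : k ≠ l := ne_of_lt hkl
      rw [Equiv.swap_apply_left, Equiv.swap_apply_of_ne_of_ne (Ne.symm hlk) hlb]
      rw [Fin.lt_def] at hkl ⊢
      have : (l : ℕ) ≠ (b : ℕ) := fun h' => hlb (Fin.ext h')
      omega
  · rcases eq_or_ne k b with hkb | hkb
    · have hbl : b < l := hkb ▸ hkl
      have hla : l ≠ a := by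
        intro h'; rw [h', Fin.lt_def] at hbl; omega
      have hlb : l ≠ b := ne_of_gt hbl
      rw [hkb, Equiv.swap_apply_right, Equiv.swap_apply_of_ne_of_ne hla hlb]
      rw [Fin.lt_def] at hbl ⊢; omega
    · rw [Equiv.swap_apply_of_ne_of_ne hka hkb]
      rcases eq_or_ne l a with rfl | hla
      · rw [Equiv.swap_apply_left, Fin.lt_def] at *
        omega
      · rcases eq_or_ne l b with rfl | hlb
        · rw [Equiv.swap_apply_right, Fin.lt_def] at *
          have h1 : (k : ℕ) ≠ (a : ℕ) := fun h' => hka (Fin.ext h')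
          omega
        · rwa [Equiv.swap_apply_of_ne_of_ne hla hlb]

end Aux

/-- Proposition 3.4: the permutation `σ_{i',i}` sends `i`-bounded indices to `i'`-bounded
ones; if the move is non-trivial then its position `k` is `i`-bounded and `σ(k) = k`. -/
theorem sigma_bounded (P : SimpleGraph V) (cs : CoxeterSystem (coxeterMatrix P) W)
    (u v : W) {m : ℕ} (hm : m = cs.length u + cs.length v)
    (e e' : Fin m → Bool × V) (he : IsRWordPair P cs u v e) (he' : IsRWordPair P cs u v e')
    (s : MoveSpec m) (hmv : IsMove P e e' s) :
    (∀ l, BoundedIdx e l → BoundedIdx e' (moveSigma e s l)) ∧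
      (¬ MoveTrivial e s → BoundedIdx e s.pos ∧ moveSigma e s s.pos = s.pos) := by
  classical
  cases s with
  | two a b =>
    obtain ⟨hab, hTA, hea, heb, hrest⟩ := hmv
    have hne : a ≠ b := fun h => by rw [h] at hab; omega
    have haltb : a < b := by rw [Fin.lt_def]; omega
    have hadj : ∀ x, e' x = e (Equiv.swap a b x) := by
      intro x
      rcases eq_or_ne x a with rfl | hxa
      · rw [Equiv.swap_apply_left]; exact hea
      rcases eq_or_ne x b with rfl | hxb
      · rw [Equiv.swap_apply_right]; exact heb
      · rw [Equiv.swap_apply_of_ne_of_ne hxa hxb]; exact hrest x hxa hxb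
    by_cases htr : e b = negEnt (e a)
    · have hσ : moveSigma e (MoveSpec.two a b) = 1 := by
        simp only [moveSigma, if_pos htr]
      have hsame : (e a).2 = (e b).2 := by rw [htr]; rfl
      have hsnd : ∀ x, (e' x).2 = (e x).2 := by
        intro x
        rw [hadj x]
        rcases eq_or_ne x a with rfl | hxa
        · rw [Equiv.swap_apply_left]; exact hsame.symm
        rcases eq_or_ne x b with rfl | hxb
        · rw [Equiv.swap_apply_right]; exact hsame
        · rw [Equiv.swap_apply_of_ne_of_ne hxa hxb]
      refine ⟨?_, ?_⟩
      · intro l hl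
        rw [hσ]
        simp only [Equiv.Perm.coe_one, id_eq]
        rw [boundedIdx_iff] at hl ⊢
        obtain ⟨k, h1, h2⟩ := hl
        exact ⟨k, h1, by rw [hsnd, hsnd]; exact h2⟩
      · intro _
        constructor
        · exact (boundedIdx_iff e _).2 ⟨a, haltb, hsame⟩
        · rw [hσ]; rfl
    · have hσ : moveSigma e (MoveSpec.two a b) = Equiv.swap a b := by
        simp only [moveSigma, if_neg htr]
      have hne2 : (e a).2 ≠ (e b).2 := by
        intro heq
        rcases eq_or_ne (e a).1 (e b).1 with hs | hs
        · exact no_adj_eq P cs u v e he a b hab hs heq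
        · apply htr
          have hb1 : (e b).1 = !(e a).1 := by
            cases h1 : (e a).1 <;> cases h2 : (e b).1 <;> simp_all
          exact Prod.ext hb1 heq.symm
      refine ⟨?_, ?_⟩
      · intro l hl
        rw [hσ]
        rw [boundedIdx_iff] at hl ⊢
        obtain ⟨k, h1, h2⟩ := hl
        refine ⟨Equiv.swap a b k, swap_lt hab h1 ?_, ?_⟩
        · rintro ⟨rfl, rfl⟩; exact hne2 h2
        · rw [hadj, hadj, Equiv.swap_apply_self, Equiv.swap_apply_self]
          exact h2
      · intro h
        simp only [MoveTrivial] at h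
        exact absurd (not_not.mp h) htr
  | three a b c =>
    obtain ⟨hab, hbc, hca, hTA, hea, heb, hec, hrest⟩ := hmv
    have haltb : a < b := by rw [Fin.lt_def]; omega
    have hbltc : b < c := by rw [Fin.lt_def]; omega
    have haltc : a < c := lt_trans haltb hbltc
    have hne_ab : a ≠ b := ne_of_lt haltb
    have hne_bc : b ≠ c := ne_of_lt hbltc
    have hne_ac : a ≠ c := ne_of_lt haltc
    have hca2 : (e c).2 = (e a).2 := congrArg Prod.snd hca
    have hletter : (e b).2 ≠ (e a).2 := by
      have h := hTA.2
      rw [hca2] at h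
      exact h.ne
    have hσ : moveSigma e (MoveSpec.three a b c) = Equiv.swap a b := by
      simp only [moveSigma]
    have h'a : (e' a).2 = (e b).2 := congrArg Prod.snd hea
    have h'b : (e' b).2 = (e a).2 := congrArg Prod.snd heb
    have h'c : (e' c).2 = (e b).2 := congrArg Prod.snd hec
    have h'rest : ∀ l, l ≠ a → l ≠ b → l ≠ c → (e' l).2 = (e l).2 :=
      fun l ha1 hb1 hc1 => congrArg Prod.snd (hrest l ha1 hb1 hc1)
    refine ⟨?_, ?_⟩
    · intro l hl
      rw [hσ]
      rw [boundedIdx_iff] at hl ⊢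
      obtain ⟨k, hkl, hks⟩ := hl
      rcases eq_or_ne l a with h | hla
      · rw [h] at hkl hks ⊢
        have hka : k ≠ a := ne_of_lt hkl
        have hkb : k ≠ b := by intro h; rw [h, Fin.lt_def] at hkl; omega
        have hkc : k ≠ c := by intro h; rw [h, Fin.lt_def] at hkl; omega
        rw [Equiv.swap_apply_left]
        exact ⟨k, lt_trans hkl haltb, by rw [h'rest k hka hkb hkc, h'b]; exact hks⟩
      rcases eq_or_ne l b with h | hlb
      · rw [h] at hkl hks ⊢
        have hka : k ≠ a := fun h => hletter (by rw [← h]; exact hks.symm)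
        have hkb : k ≠ b := ne_of_lt hkl
        have hklta : k < a := by
          rw [Fin.lt_def] at hkl ⊢
          have hne' : (k : ℕ) ≠ (a : ℕ) := fun h => hka (Fin.ext h)
          omega
        have hkc : k ≠ c := by intro h; rw [h, Fin.lt_def] at hkl; omega
        rw [Equiv.swap_apply_right]
        exact ⟨k, hklta, by rw [h'rest k hka hkb hkc, h'a]; exact hks⟩
      rcases eq_or_ne l c with h | hlc
      · rw [h] at hkl hks ⊢
        rw [Equiv.swap_apply_of_ne_of_ne (Ne.symm hne_ac) (Ne.symm hne_bc)]
        exact ⟨a, haltc, by rw [h'a, h'c]⟩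
      · rw [Equiv.swap_apply_of_ne_of_ne hla hlb]
        have h'l : (e' l).2 = (e l).2 := h'rest l hla hlb hlc
        rcases eq_or_ne k a with h | hka
        · rw [h] at hkl hks
          have hbl : b < l := by
            rw [Fin.lt_def] at hkl ⊢
            have h1 : (l : ℕ) ≠ (b : ℕ) := fun h => hlb (Fin.ext h)
            have h2 : (l : ℕ) ≠ (c : ℕ) := fun h => hlc (Fin.ext h)
            omega
          exact ⟨b, hbl, by rw [h'b, h'l]; exact hks⟩
        rcases eq_or_ne k b with h | hkb
        · rw [h] at hkl hks
          exact ⟨a, lt_trans haltb hkl, by rw [h'a, h'l]; exact hks⟩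
        rcases eq_or_ne k c with h | hkc
        · rw [h] at hkl hks
          exact ⟨b, lt_trans hbltc hkl, by rw [h'b, h'l, ← hca2]; exact hks⟩
        · exact ⟨k, hkl, by rw [h'rest k hka hkb hkc, h'l]; exact hks⟩
    · intro _
      constructor
      · exact (boundedIdx_iff e _).2 ⟨a, haltc, hca2.symm⟩
      · show Equiv.swap a b c = c
        exact Equiv.swap_apply_of_ne_of_ne (Ne.symm hne_ac) (Ne.symm hne_bc)

end SLC
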